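/- arXiv:1412.7334 — 3 statements merged into one kernel-verified Lean document; each statement's English description precedes it below -/
import Mathlib

section
/- (Prékopa) If h : ℝᵐ × ℝⁿ → [0,∞) is log-concave and integrable in its second argument, then the marginal I(x) = ∫_{ℝⁿ} h(x, y) dy is a log-concave function of x ∈ ℝᵐ. -/
open MeasureTheory Set ENNReal NNReal Pointwise Filter

lemma bm1 {K L : Set ℝ} (hK : IsCompact K) (hL : IsCompact L)
    (hKne : K.Nonempty) (hLne : L.Nonempty) :
    volume K + volume L ≤ volume (K + L) := by
  set a := sSup K with ha
  set b := sInf L with hb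
  have haK : a ∈ K := hK.sSup_mem hKne
  have hbL : b ∈ L := hL.sInf_mem hLne
  have h1 : (fun x => x + b) '' K ⊆ K + L := by
    rintro _ ⟨x, hx, rfl⟩; exact Set.add_mem_add hx hbL
  have h2 : (fun y => a + y) '' L ⊆ K + L := by
    rintro _ ⟨y, hy, rfl⟩; exact Set.add_mem_add haK hy
  have hinter : ((fun x => x + b) '' K) ∩ ((fun y => a + y) '' L) ⊆ {a + b} := by
    rintro z ⟨⟨x, hx, rfl⟩, ⟨y, hy, he⟩⟩
    have h₁ : x ≤ a := le_csSup hK.bddAbove hx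
    have h₂ : b ≤ y := csInf_le hL.bddBelow hy
    have : x + b ≤ a + b := by linarith
    simp only at he
    simp only [Set.mem_singleton_iff]
    linarith
  have hvK : volume ((fun x => x + b) '' K) = volume K := by
    have : (fun x => x + b) '' K = (fun x => x + (-b)) ⁻¹' K := by
      ext z; simp [Set.mem_image, eq_comm, ← eq_sub_iff_add_eq, sub_eq_add_neg]
    rw [this, measure_preimage_add_right]
  have hvL : volume ((fun y => a + y) '' L) = volume L := by
    have : (fun y => a + y) '' L = (fun y => (-a) + y) ⁻¹' L := by
      ext z; simp [Set.mem_image, eq_comm, ← eq_sub_iff_add_eq', sub_eq_neg_add]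
    rw [this, measure_preimage_add]
  have hmeas : MeasurableSet ((fun y => a + y) '' L) :=
    ((Homeomorph.addLeft a).isCompact_image.2 hL).isClosed.measurableSet
  calc volume K + volume L
      = volume ((fun x => x + b) '' K) + volume ((fun y => a + y) '' L) := by rw [hvK, hvL]
    _ = volume (((fun x => x + b) '' K) ∪ ((fun y => a + y) '' L))
        + volume (((fun x => x + b) '' K) ∩ ((fun y => a + y) '' L)) :=
        (measure_union_add_inter _ hmeas).symm
    _ ≤ volume (K + L) + volume ({a + b} : Set ℝ) := by
        exact add_le_add (measure_mono (Set.union_subset h1 h2)) (measure_mono hinter)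
    _ = volume (K + L) := by simp

lemma amgm2 {l : ℝ} (hl0 : 0 ≤ l) (hl1 : l ≤ 1) {A B : ℝ≥0∞} (hA : A ≠ ∞) (hB : B ≠ ∞) :
    A ^ l * B ^ (1 - l) ≤ ENNReal.ofReal l * A + ENNReal.ofReal (1 - l) * B := by
  lift A to ℝ≥0 using hA
  lift B to ℝ≥0 using hB
  have h1l : (0:ℝ) ≤ 1 - l := by linarith
  show (A:ℝ≥0∞) ^ l * (B:ℝ≥0∞) ^ (1-l) ≤ (l.toNNReal : ℝ≥0∞) * A + ((1-l).toNNReal : ℝ≥0∞) * B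
  rw [← ENNReal.coe_rpow_of_nonneg _ hl0, ← ENNReal.coe_rpow_of_nonneg _ h1l,
     ← ENNReal.coe_mul, ← ENNReal.coe_mul, ← ENNReal.coe_mul,
    ← ENNReal.coe_add, ENNReal.coe_le_coe]
  have := NNReal.geom_mean_le_arith_mean2_weighted (w₁ := l.toNNReal) (w₂ := (1-l).toNNReal)
    (p₁ := A) (p₂ := B) ?_
  · convert this using 3
    · rw [Real.coe_toNNReal _ hl0]
    · rw [Real.coe_toNNReal _ h1l]
  · ext : 1 -- sum = 1
    push_cast [Real.coe_toNNReal _ hl0, Real.coe_toNNReal _ h1l]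
    ring

lemma pl_dim1_bounded {l : ℝ} (hl0 : 0 < l) (hl1 : l < 1)
    (f g h : ℝ → ℝ≥0∞) (hf : Measurable f) (hg : Measurable g) (hh : Measurable h)
    (hyp : ∀ x y : ℝ, f x ^ l * g y ^ (1 - l) ≤ h (l * x + (1 - l) * y))
    (hIf : ∫⁻ x, f x ≠ ∞) (hIg : ∫⁻ x, g x ≠ ∞)
    (hFf : essSup f volume ≠ ∞) (hGg : essSup g volume ≠ ∞) :
    (∫⁻ x, f x) ^ l * (∫⁻ x, g x) ^ (1 - l) ≤ ∫⁻ x, h x := by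
  have h1l : (0:ℝ) < 1 - l := by linarith
  by_cases h0f : ∫⁻ x, f x = 0
  · simp [h0f, ENNReal.zero_rpow_of_pos hl0]
  by_cases h0g : ∫⁻ x, g x = 0
  · simp [h0g, ENNReal.zero_rpow_of_pos h1l]
  by_cases htop : ∫⁻ x, h x = ∞
  · exact htop ▸ le_top
  set F := essSup f volume with hF
  set G := essSup g volume with hG
  have hF0 : F ≠ 0 := by
    intro h0
    refine h0f (le_antisymm ?_ zero_le)
    calc ∫⁻ x, f x ≤ ∫⁻ x, (0:ℝ≥0∞) :=
          lintegral_mono_ae ((ae_le_essSup f).mono fun x hx => by rw [← h0]; exact hx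
            )
      _ = 0 := lintegral_zero
  have hG0 : G ≠ 0 := by
    intro h0
    refine h0g (le_antisymm ?_ zero_le)
    calc ∫⁻ x, g x ≤ ∫⁻ x, (0:ℝ≥0∞) :=
          lintegral_mono_ae ((ae_le_essSup g).mono fun x hx => by rw [← h0]; exact hx)
      _ = 0 := lintegral_zero
  set M := F ^ l * G ^ (1 - l) with hM
  have hM0 : M ≠ 0 := by
    simp [hM, ENNReal.rpow_eq_zero_iff, hF0, hG0, hFf, hGg, hl0, h1l, not_lt.2 hl0.le,
      not_lt.2 h1l.le]
  have hMtop : M ≠ ∞ :=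
    ENNReal.mul_ne_top (ENNReal.rpow_ne_top_of_nonneg hl0.le hFf)
      (ENNReal.rpow_ne_top_of_nonneg h1l.le hGg)
  -- the core superlevel-set inequality
  have core : ∀ s : ℝ, 0 < s →
      ENNReal.ofReal l * volume {x | F * ENNReal.ofReal s < f x}
        + ENNReal.ofReal (1 - l) * volume {y | G * ENNReal.ofReal s < g y}
      ≤ volume {z | M * ENNReal.ofReal s < h z} := by
    intro s hs
    rcases le_or_gt 1 s with hs1 | hs1
    · have hzf : volume {x | F * ENNReal.ofReal s < f x} = 0 := by
        have : ∀ᵐ x, f x ≤ F * ENNReal.ofReal s :=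
          (ae_le_essSup f).mono fun x hx =>
            hx.trans (le_mul_of_one_le_right zero_le (ENNReal.one_le_ofReal.2 hs1))
        have := ae_iff.1 this
        convert this using 2
        ext x; simp [not_le]
      have hzg : volume {y | G * ENNReal.ofReal s < g y} = 0 := by
        have : ∀ᵐ y, g y ≤ G * ENNReal.ofReal s :=
          (ae_le_essSup g).mono fun y hy =>
            hy.trans (le_mul_of_one_le_right zero_le (ENNReal.one_le_ofReal.2 hs1))
        have := ae_iff.1 this
        convert this using 2
        ext y; simp [not_le]
      simp [hzf, hzg]
    · set A := {x | F * ENNReal.ofReal s < f x} with hA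
      set B := {y | G * ENNReal.ofReal s < g y} with hB
      set T := {z | M * ENNReal.ofReal s < h z} with hT
      have hs0 : ENNReal.ofReal s ≠ 0 := by
        simp [ENNReal.ofReal_eq_zero, not_le, hs]
      have hAm : MeasurableSet A := measurableSet_lt measurable_const hf
      have hBm : MeasurableSet B := measurableSet_lt measurable_const hg
      have hFs0 : F * ENNReal.ofReal s ≠ 0 := mul_ne_zero hF0 hs0
      have hFstop : F * ENNReal.ofReal s ≠ ∞ := ENNReal.mul_ne_top hFf ENNReal.ofReal_ne_top
      have hGs0 : G * ENNReal.ofReal s ≠ 0 := mul_ne_zero hG0 hs0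
      have hGstop : G * ENNReal.ofReal s ≠ ∞ := ENNReal.mul_ne_top hGg ENNReal.ofReal_ne_top
      have hA0 : volume A ≠ 0 := by
        intro h0
        have hae : ∀ᵐ x, f x ≤ F * ENNReal.ofReal s := by
          rw [ae_iff]
          convert h0 using 2
          ext x; simp [hA, not_le]
        have h1 : F ≤ F * ENNReal.ofReal s := essSup_le_of_ae_le _ hae
        have h2 : F * ENNReal.ofReal s < F * 1 := by
          apply ENNReal.mul_lt_mul_right hF0 hFf
          exact ENNReal.ofReal_lt_one.2 hs1
        rw [mul_one] at h2
        exact absurd (h1.trans_lt h2) (lt_irrefl _)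
      have hB0 : volume B ≠ 0 := by
        intro h0
        have hae : ∀ᵐ y, g y ≤ G * ENNReal.ofReal s := by
          rw [ae_iff]
          convert h0 using 2
          ext y; simp [hB, not_le]
        have h1 : G ≤ G * ENNReal.ofReal s := essSup_le_of_ae_le _ hae
        have h2 : G * ENNReal.ofReal s < G * 1 := by
          apply ENNReal.mul_lt_mul_right hG0 hGg
          exact ENNReal.ofReal_lt_one.2 hs1
        rw [mul_one] at h2
        exact absurd (h1.trans_lt h2) (lt_irrefl _)
      have hAtop : volume A ≠ ∞ := by
        have mk := meas_ge_le_lintegral_div (μ := volume) hf.aemeasurable (ε := F * ENNReal.ofReal s) hFs0 hFstop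
        have : volume A ≤ (∫⁻ x, f x) / (F * ENNReal.ofReal s) :=
          le_trans (measure_mono fun x (hx : F * ENNReal.ofReal s < f x) => hx.le) mk
        exact (this.trans_lt (ENNReal.div_lt_top hIf hFs0)).ne
      have hBtop : volume B ≠ ∞ := by
        have mk := meas_ge_le_lintegral_div (μ := volume) hg.aemeasurable (ε := G * ENNReal.ofReal s) hGs0 hGstop
        have : volume B ≤ (∫⁻ y, g y) / (G * ENNReal.ofReal s) :=
          le_trans (measure_mono fun y (hy : G * ENNReal.ofReal s < g y) => hy.le) mk
        exact (this.trans_lt (ENNReal.div_lt_top hIg hGs0)).ne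
      refine ENNReal.le_of_forall_pos_le_add fun ε hε hTlt => ?_
      obtain ⟨K₀, hK₀A, hK₀c, hK₀v⟩ := hAm.exists_isCompact_lt_add hAtop
        (ε := (ε : ℝ≥0∞)) (by exact_mod_cast hε.ne')
      obtain ⟨L₀, hL₀B, hL₀c, hL₀v⟩ := hBm.exists_isCompact_lt_add hBtop
        (ε := (ε : ℝ≥0∞)) (by exact_mod_cast hε.ne')
      obtain ⟨xA, hxA⟩ := nonempty_of_measure_ne_zero hA0
      obtain ⟨yB, hyB⟩ := nonempty_of_measure_ne_zero hB0
      set K := K₀ ∪ {xA} with hK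
      set L := L₀ ∪ {yB} with hL
      have hKc : IsCompact K := hK₀c.union isCompact_singleton
      have hLc : IsCompact L := hL₀c.union isCompact_singleton
      have hKA : K ⊆ A := union_subset hK₀A (singleton_subset_iff.2 hxA)
      have hLB : L ⊆ B := union_subset hL₀B (singleton_subset_iff.2 hyB)
      have hKne : K.Nonempty := ⟨xA, Or.inr rfl⟩
      have hLne : L.Nonempty := ⟨yB, Or.inr rfl⟩
      have hKv : volume A < volume K + ε :=
        hK₀v.trans_le (add_le_add_left (measure_mono subset_union_left) _)
      have hLv : volume B < volume L + ε :=
        hL₀v.trans_le (add_le_add_left (measure_mono subset_union_left) _)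
      -- the key inclusion
      have key : l • K + (1 - l) • L ⊆ T := by
        intro z hz
        obtain ⟨a, ha, b, hb, rfl⟩ := Set.mem_add.1 hz
        obtain ⟨x, hx, rfl⟩ := Set.mem_smul_set.1 ha
        obtain ⟨y, hy, rfl⟩ := Set.mem_smul_set.1 hb
        have hx' : F * ENNReal.ofReal s < f x := hKA hx
        have hy' : G * ENNReal.ofReal s < g y := hLB hy
        show M * ENNReal.ofReal s < h (l • x + (1 - l) • y)
        have e1 : M * ENNReal.ofReal s
            = (F * ENNReal.ofReal s) ^ l * (G * ENNReal.ofReal s) ^ (1 - l) := by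
          rw [ENNReal.mul_rpow_of_nonneg _ _ hl0.le, ENNReal.mul_rpow_of_nonneg _ _ h1l.le]
          have e2 : ENNReal.ofReal s ^ l * ENNReal.ofReal s ^ (1 - l) = ENNReal.ofReal s := by
            rw [← ENNReal.rpow_add _ _ hs0 ENNReal.ofReal_ne_top]
            norm_num
          calc M * ENNReal.ofReal s
              = (F ^ l * G ^ (1 - l)) * (ENNReal.ofReal s ^ l * ENNReal.ofReal s ^ (1 - l)) := by
                rw [e2]
            _ = F ^ l * ENNReal.ofReal s ^ l * (G ^ (1 - l) * ENNReal.ofReal s ^ (1 - l)) := by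
                ring
        rw [e1]
        calc (F * ENNReal.ofReal s) ^ l * (G * ENNReal.ofReal s) ^ (1 - l)
            < f x ^ l * (G * ENNReal.ofReal s) ^ (1 - l) := by
              apply ENNReal.mul_lt_mul_left
                (by simp [ENNReal.rpow_eq_zero_iff, hGs0, hGstop, not_lt.2 h1l.le])
                (ENNReal.rpow_ne_top_of_nonneg h1l.le hGstop)
              exact ENNReal.rpow_lt_rpow hx' hl0
          _ ≤ f x ^ l * g y ^ (1 - l) :=
              mul_le_mul_right (ENNReal.rpow_le_rpow hy'.le h1l.le) _
          _ ≤ h (l * x + (1 - l) * y) := hyp x y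
          _ = h (l • x + (1 - l) • y) := by simp [smul_eq_mul]
      -- measure computation
      have hsmulK : volume (l • K) = ENNReal.ofReal l * volume K := by
        rw [Measure.addHaar_smul]
        congr 1
        simp [abs_of_pos hl0]
      have hsmulL : volume ((1 - l) • L) = ENNReal.ofReal (1 - l) * volume L := by
        rw [Measure.addHaar_smul]
        congr 1
        simp [abs_of_pos h1l]
      have hbm : volume (l • K) + volume ((1 - l) • L) ≤ volume T := by
        refine le_trans ?_ (measure_mono key)
        exact bm1 (hKc.smul l) (hLc.smul (1 - l)) (hKne.smul_set) (hLne.smul_set)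
      calc ENNReal.ofReal l * volume A + ENNReal.ofReal (1 - l) * volume B
          ≤ ENNReal.ofReal l * (volume K + ε) + ENNReal.ofReal (1 - l) * (volume L + ε) :=
            add_le_add (mul_le_mul_right hKv.le _) (mul_le_mul_right hLv.le _)
        _ = (ENNReal.ofReal l * volume K + ENNReal.ofReal (1 - l) * volume L)
            + (ENNReal.ofReal l + ENNReal.ofReal (1 - l)) * ε := by ring
        _ = (volume (l • K) + volume ((1 - l) • L)) + ε := by
            have e1 : ENNReal.ofReal l + ENNReal.ofReal (1 - l) = 1 := by
              rw [← ENNReal.ofReal_add hl0.le h1l.le]; norm_num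
            rw [hsmulK, hsmulL, e1, one_mul]
        _ ≤ volume T + ε := by gcongr
  
  -- layer cake computations
  have hae_f : ∀ᵐ x, f x ≤ F := ae_le_essSup f
  have hae_g : ∀ᵐ y, g y ≤ G := ae_le_essSup g
  have hae_h : ∀ᵐ (z : ℝ), h z < ∞ := ae_lt_top hh htop
  have layer : ∀ (φ : ℝ → ℝ≥0∞), Measurable φ → ∀ C : ℝ≥0∞, C ≠ 0 → C ≠ ∞ →
      (∀ᵐ (x : ℝ), φ x / C ≠ ∞) →
      ∫⁻ t in Ioi 0, volume {x | C * ENNReal.ofReal t < φ x} = (∫⁻ x, φ x) / C := by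
    intro φ hφ C hC0 hCtop hfin
    have e1 : ∫⁻ x, ENNReal.ofReal ((φ x / C).toReal) = ∫⁻ x, φ x / C := by
      exact lintegral_congr_ae (hfin.mono fun x hx => ENNReal.ofReal_toReal hx)
    have e2 : ∫⁻ x, φ x / C = (∫⁻ x, φ x) / C := by
      simp_rw [div_eq_mul_inv]
      exact lintegral_mul_const' C⁻¹ φ (by simp [hC0])
    have e3 := lintegral_eq_lintegral_meas_lt volume
      (f := fun x => (φ x / C).toReal)
      (ae_of_all _ fun x => ENNReal.toReal_nonneg)
      ((hφ.div_const C).ennreal_toReal).aemeasurable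
    rw [← e2, ← e1, e3]
    refine setLIntegral_congr_fun measurableSet_Ioi (fun t ht => ?_)
    refine measure_congr ?_
    rw [Filter.eventuallyEq_set]
    filter_upwards [hfin] with x hx
    have step1 : t < (φ x / C).toReal ↔ ENNReal.ofReal t < φ x / C :=
      (ENNReal.ofReal_lt_iff_lt_toReal (le_of_lt ht) hx).symm
    have step2 : ENNReal.ofReal t < φ x / C ↔ ENNReal.ofReal t * C < φ x :=
      ENNReal.lt_div_iff_mul_lt (Or.inl hC0) (Or.inl hCtop)
    show C * ENNReal.ofReal t < φ x ↔ t < (φ x / C).toReal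
    rw [step1, step2, mul_comm (ENNReal.ofReal t) C]
  have lcf : ∫⁻ t in Ioi 0, volume {x | F * ENNReal.ofReal t < f x} = (∫⁻ x, f x) / F := by
    refine layer f hf F hF0 hFf (hae_f.mono fun x hx => ?_)
    simp [ENNReal.div_eq_top, hF0, (hx.trans_lt hFf.lt_top).ne]
  have lcg : ∫⁻ t in Ioi 0, volume {y | G * ENNReal.ofReal t < g y} = (∫⁻ y, g y) / G := by
    refine layer g hg G hG0 hGg (hae_g.mono fun y hy => ?_)
    simp [ENNReal.div_eq_top, hG0, (hy.trans_lt hGg.lt_top).ne]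
  have lch : ∫⁻ t in Ioi 0, volume {z | M * ENNReal.ofReal t < h z} = (∫⁻ z, h z) / M := by
    refine layer h hh M hM0 hMtop (hae_h.mono fun z hz => ?_)
    simp [ENNReal.div_eq_top, hM0, hz.ne]
  have hmA : Measurable fun t : ℝ => volume {x | F * ENNReal.ofReal t < f x} :=
    Antitone.measurable fun t₁ t₂ hle => measure_mono fun x hx =>
      lt_of_le_of_lt (mul_le_mul_right (ENNReal.ofReal_le_ofReal hle) F) hx
  have hmB : Measurable fun t : ℝ => volume {y | G * ENNReal.ofReal t < g y} :=
    Antitone.measurable fun t₁ t₂ hle => measure_mono fun y hy =>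
      lt_of_le_of_lt (mul_le_mul_right (ENNReal.ofReal_le_ofReal hle) G) hy
  have hmT : Measurable fun t : ℝ => volume {z | M * ENNReal.ofReal t < h z} :=
    Antitone.measurable fun t₁ t₂ hle => measure_mono fun z hz =>
      lt_of_le_of_lt (mul_le_mul_right (ENNReal.ofReal_le_ofReal hle) M) hz
  have main : ENNReal.ofReal l * ((∫⁻ x, f x) / F) + ENNReal.ofReal (1 - l) * ((∫⁻ y, g y) / G)
      ≤ (∫⁻ z, h z) / M := by
    rw [← lcf, ← lcg, ← lch,
      ← lintegral_const_mul' _ _ (ENNReal.ofReal_ne_top (r := l)),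
      ← lintegral_const_mul' _ _ (ENNReal.ofReal_ne_top (r := 1 - l)),
      ← lintegral_add_left (hmA.const_mul _)]
    exact setLIntegral_mono hmT fun t ht => core t ht
  have hAfin : (∫⁻ x, f x) / F ≠ ∞ := (ENNReal.div_lt_top hIf hF0).ne
  have hBfin : (∫⁻ y, g y) / G ≠ ∞ := (ENNReal.div_lt_top hIg hG0).ne
  calc (∫⁻ x, f x) ^ l * (∫⁻ x, g x) ^ (1 - l)
      = ((∫⁻ x, f x) / F) ^ l * ((∫⁻ x, g x) / G) ^ (1 - l) * M := by
        conv_lhs => rw [← ENNReal.div_mul_cancel hF0 hFf (b := ∫⁻ x, f x),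
          ← ENNReal.div_mul_cancel hG0 hGg (b := ∫⁻ x, g x)]
        rw [ENNReal.mul_rpow_of_nonneg _ _ hl0.le, ENNReal.mul_rpow_of_nonneg _ _ h1l.le, hM]
        ring
    _ ≤ (ENNReal.ofReal l * ((∫⁻ x, f x) / F)
          + ENNReal.ofReal (1 - l) * ((∫⁻ x, g x) / G)) * M :=
        mul_le_mul_left (amgm2 hl0.le (by linarith) hAfin hBfin) M
    _ ≤ ((∫⁻ z, h z) / M) * M := mul_le_mul_left main M
    _ = ∫⁻ z, h z := ENNReal.div_mul_cancel hM0 hMtop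

lemma trunc_sup (a : ℝ≥0∞) : ⨆ k : ℕ, min a (k : ℝ≥0∞) = a := by
  apply le_antisymm (iSup_le fun k => min_le_left _ _)
  rcases eq_or_ne a ∞ with rfl | ha
  · have : ∀ k : ℕ, min (∞ : ℝ≥0∞) (k : ℝ≥0∞) = (k : ℝ≥0∞) := fun k => min_eq_right le_top
    simp only [this, ENNReal.iSup_natCast, le_refl]
  · obtain ⟨k, hk⟩ := exists_nat_ge a.toReal
    refine le_iSup_of_le k (le_min le_rfl ?_)
    rw [← ENNReal.ofReal_toReal ha, ← ENNReal.ofReal_natCast]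
    exact ENNReal.ofReal_le_ofReal hk

/-- truncation of an `ℝ≥0∞`-valued function on `ℝ`. -/
noncomputable def trunc (f : ℝ → ℝ≥0∞) (k : ℕ) : ℝ → ℝ≥0∞ :=
  (Icc (-(k:ℝ)) k).indicator (fun x => min (f x) k)

lemma trunc_le (f : ℝ → ℝ≥0∞) (k : ℕ) (x : ℝ) : trunc f k x ≤ f x := by
  unfold trunc
  by_cases hx : x ∈ Icc (-(k:ℝ)) k
  · rw [indicator_of_mem hx]; exact min_le_left _ _
  · rw [indicator_of_notMem hx]; exact zero_le

lemma trunc_mono (f : ℝ → ℝ≥0∞) : Monotone fun k => trunc f k := by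
  intro k₁ k₂ hk x
  show trunc f k₁ x ≤ trunc f k₂ x
  unfold trunc
  by_cases hx : x ∈ Icc (-(k₁:ℝ)) k₁
  · have hx2 : x ∈ Icc (-(k₂:ℝ)) k₂ := by
      obtain ⟨h1, h2⟩ := hx
      have : (k₁ : ℝ) ≤ k₂ := by exact_mod_cast hk
      exact ⟨by linarith, by linarith⟩
    rw [indicator_of_mem hx, indicator_of_mem hx2]
    exact min_le_min le_rfl (by exact_mod_cast hk)
  · rw [indicator_of_notMem hx]; exact zero_le

lemma trunc_iSup (f : ℝ → ℝ≥0∞) (x : ℝ) : ⨆ k, trunc f k x = f x := by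
  apply le_antisymm (iSup_le fun k => trunc_le f k x)
  conv_lhs => rw [← trunc_sup (f x)]
  refine iSup_le fun k => ?_
  obtain ⟨k₀, hk₀⟩ := exists_nat_ge |x|
  refine le_iSup_of_le (max k k₀) ?_
  have hxm : x ∈ Icc (-((max k k₀ : ℕ) : ℝ)) ((max k k₀ : ℕ) : ℝ) := by
    have h1 : |x| ≤ ((max k k₀ : ℕ) : ℝ) := hk₀.trans (by exact_mod_cast le_max_right k k₀)
    obtain ⟨a, b⟩ := abs_le.1 h1
    exact ⟨a, b⟩
  unfold trunc
  rw [indicator_of_mem hxm]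
  exact min_le_min le_rfl (by exact_mod_cast le_max_left k k₀)

lemma trunc_measurable {f : ℝ → ℝ≥0∞} (hf : Measurable f) (k : ℕ) :
    Measurable (trunc f k) :=
  ((hf.min measurable_const).indicator measurableSet_Icc)

lemma trunc_lintegral_ne_top {f : ℝ → ℝ≥0∞} (k : ℕ) : ∫⁻ x, trunc f k x ≠ ∞ := by
  have hle : ∀ x, trunc f k x ≤ (Icc (-(k:ℝ)) k).indicator (fun _ => (k : ℝ≥0∞)) x := by
    intro x
    unfold trunc
    by_cases hx : x ∈ Icc (-(k:ℝ)) k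
    · rw [indicator_of_mem hx, indicator_of_mem hx]; exact min_le_right _ _
    · rw [indicator_of_notMem hx, indicator_of_notMem hx]
  refine ne_top_of_le_ne_top ?_ (lintegral_mono hle)
  rw [lintegral_indicator_const measurableSet_Icc]
  exact ENNReal.mul_ne_top (natCast_ne_top k) (by simp [Real.volume_Icc])

lemma trunc_essSup_ne_top (f : ℝ → ℝ≥0∞) (k : ℕ) : essSup (trunc f k) volume ≠ ∞ := by
  refine ne_top_of_le_ne_top (natCast_ne_top k) (essSup_le_of_ae_le _ (ae_of_all _ fun x => ?_))
  unfold trunc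
  by_cases hx : x ∈ Icc (-(k:ℝ)) k
  · rw [indicator_of_mem hx]; exact min_le_right _ _
  · rw [indicator_of_notMem hx]; exact zero_le

lemma pl_dim1 {l : ℝ} (hl0 : 0 < l) (hl1 : l < 1)
    (f g h : ℝ → ℝ≥0∞) (hf : Measurable f) (hg : Measurable g) (hh : Measurable h)
    (hyp : ∀ x y : ℝ, f x ^ l * g y ^ (1 - l) ≤ h (l * x + (1 - l) * y)) :
    (∫⁻ x, f x) ^ l * (∫⁻ x, g x) ^ (1 - l) ≤ ∫⁻ x, h x := by
  have h1l : (0:ℝ) < 1 - l := by linarith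
  have key : ∀ k : ℕ, (∫⁻ x, trunc f k x) ^ l * (∫⁻ x, trunc g k x) ^ (1 - l) ≤ ∫⁻ x, h x := by
    intro k
    refine pl_dim1_bounded hl0 hl1 _ _ _ (trunc_measurable hf k) (trunc_measurable hg k) hh
      (fun x y => ?_) (trunc_lintegral_ne_top k) (trunc_lintegral_ne_top k)
      (trunc_essSup_ne_top f k) (trunc_essSup_ne_top g k)
    calc trunc f k x ^ l * trunc g k y ^ (1 - l)
        ≤ f x ^ l * g y ^ (1 - l) :=
          mul_le_mul' (ENNReal.rpow_le_rpow (trunc_le f k x) hl0.le)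
            (ENNReal.rpow_le_rpow (trunc_le g k y) h1l.le)
      _ ≤ h (l * x + (1 - l) * y) := hyp x y
  have hfs : ∫⁻ x, f x = ⨆ k, ∫⁻ x, trunc f k x := by
    rw [← lintegral_iSup (fun k => trunc_measurable hf k) (fun k₁ k₂ hk => trunc_mono f hk)]
    exact lintegral_congr fun x => (trunc_iSup f x).symm
  have hgs : ∫⁻ x, g x = ⨆ k, ∫⁻ x, trunc g k x := by
    rw [← lintegral_iSup (fun k => trunc_measurable hg k) (fun k₁ k₂ hk => trunc_mono g hk)]
    exact lintegral_congr fun x => (trunc_iSup g x).symm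
  rw [hfs, hgs]
  have e1 : (⨆ k, ∫⁻ x, trunc f k x) ^ l = ⨆ k, (∫⁻ x, trunc f k x) ^ l := by
    have := (ENNReal.orderIsoRpow l hl0).leftOrdContinuous.map_iSup
      (fun k => ∫⁻ x, trunc f k x)
    simp only [ENNReal.orderIsoRpow_apply] at this
    exact this
  have e2 : (⨆ k, ∫⁻ x, trunc g k x) ^ (1 - l) = ⨆ k, (∫⁻ x, trunc g k x) ^ (1 - l) := by
    have := (ENNReal.orderIsoRpow (1 - l) h1l).leftOrdContinuous.map_iSup
      (fun k => ∫⁻ x, trunc g k x)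
    simp only [ENNReal.orderIsoRpow_apply] at this
    exact this
  rw [e1, e2, ENNReal.iSup_mul]
  refine iSup_le fun k => ?_
  rw [ENNReal.mul_iSup]
  refine iSup_le fun j => ?_
  have hmono_f : ∀ k₁ k₂ : ℕ, k₁ ≤ k₂ → ∫⁻ x, trunc f k₁ x ≤ ∫⁻ x, trunc f k₂ x :=
    fun k₁ k₂ hk => lintegral_mono (trunc_mono f hk)
  have hmono_g : ∀ k₁ k₂ : ℕ, k₁ ≤ k₂ → ∫⁻ x, trunc g k₁ x ≤ ∫⁻ x, trunc g k₂ x :=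
    fun k₁ k₂ hk => lintegral_mono (trunc_mono g hk)
  calc (∫⁻ x, trunc f k x) ^ l * (∫⁻ x, trunc g j x) ^ (1 - l)
      ≤ (∫⁻ x, trunc f (max k j) x) ^ l * (∫⁻ x, trunc g (max k j) x) ^ (1 - l) :=
        mul_le_mul' (ENNReal.rpow_le_rpow (hmono_f _ _ (le_max_left k j)) hl0.le)
          (ENNReal.rpow_le_rpow (hmono_g _ _ (le_max_right k j)) h1l.le)
    _ ≤ ∫⁻ x, h x := key (max k j)

lemma pl_dim (n : ℕ) {l : ℝ} (hl0 : 0 < l) (hl1 : l < 1)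
    (f g h : (Fin n → ℝ) → ℝ≥0∞) (hf : Measurable f) (hg : Measurable g) (hh : Measurable h)
    (hyp : ∀ x y, f x ^ l * g y ^ (1 - l) ≤ h (l • x + (1 - l) • y)) :
    (∫⁻ x, f x) ^ l * (∫⁻ x, g x) ^ (1 - l) ≤ ∫⁻ x, h x := by
  induction n with
  | zero =>
    rw [lintegral_unique f, lintegral_unique g, lintegral_unique h]
    have huniv : (volume : Measure (Fin 0 → ℝ)) univ = 1 := by
      rw [volume_pi, Measure.pi_univ]
      simp
    rw [huniv, mul_one, mul_one, mul_one]
    have := hyp default default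
    convert this using 4 <;> exact Subsingleton.elim _ _
  | succ n ih =>
    set e := MeasurableEquiv.piFinSuccAbove (fun _ : Fin (n+1) => ℝ) 0 with he
    have mp : MeasurePreserving e volume volume :=
      volume_preserving_piFinSuccAbove (fun _ : Fin (n+1) => ℝ) 0
    have elin : ∀ (a b : Fin (n+1) → ℝ), e (l • a + (1 - l) • b) = l • e a + (1 - l) • e b :=
      fun a b => rfl
    have esymmlin : ∀ (p q : ℝ × (Fin n → ℝ)),
        e.symm (l • p + (1 - l) • q) = l • e.symm p + (1 - l) • e.symm q := by
      intro p q
      apply e.injective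
      rw [e.apply_symm_apply, elin, e.apply_symm_apply, e.apply_symm_apply]
    set f' : ℝ × (Fin n → ℝ) → ℝ≥0∞ := fun p => f (e.symm p) with hf'
    set g' : ℝ × (Fin n → ℝ) → ℝ≥0∞ := fun p => g (e.symm p) with hg'
    set h' : ℝ × (Fin n → ℝ) → ℝ≥0∞ := fun p => h (e.symm p) with hh'
    have hf'm : Measurable f' := hf.comp e.symm.measurable
    have hg'm : Measurable g' := hg.comp e.symm.measurable
    have hh'm : Measurable h' := hh.comp e.symm.measurable
    have intf : ∫⁻ x, f x = ∫⁻ t, ∫⁻ y, f' (t, y) := by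
      have i1 : ∫⁻ x, f x = ∫⁻ x, f' (e x) := by
        simp only [hf', e.symm_apply_apply]
      rw [i1, mp.lintegral_comp hf'm, Measure.volume_eq_prod, lintegral_prod _ hf'm.aemeasurable]
    have intg : ∫⁻ x, g x = ∫⁻ t, ∫⁻ y, g' (t, y) := by
      have i1 : ∫⁻ x, g x = ∫⁻ x, g' (e x) := by
        simp only [hg', e.symm_apply_apply]
      rw [i1, mp.lintegral_comp hg'm, Measure.volume_eq_prod, lintegral_prod _ hg'm.aemeasurable]
    have inth : ∫⁻ x, h x = ∫⁻ t, ∫⁻ y, h' (t, y) := by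
      have i1 : ∫⁻ x, h x = ∫⁻ x, h' (e x) := by
        simp only [hh', e.symm_apply_apply]
      rw [i1, mp.lintegral_comp hh'm, Measure.volume_eq_prod, lintegral_prod _ hh'm.aemeasurable]
    rw [intf, intg, inth]
    refine pl_dim1 hl0 hl1 _ _ _ hf'm.lintegral_prod_right' hg'm.lintegral_prod_right'
      hh'm.lintegral_prod_right' fun t₁ t₂ => ?_
    refine ih (fun y => f' (t₁, y)) (fun y => g' (t₂, y))
      (fun y => h' (l * t₁ + (1 - l) * t₂, y))
      (hf'm.comp measurable_prodMk_left) (hg'm.comp measurable_prodMk_left)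
      (hh'm.comp measurable_prodMk_left) fun y₁ y₂ => ?_
    have hpair : (l * t₁ + (1 - l) * t₂, l • y₁ + (1 - l) • y₂)
        = l • ((t₁, y₁) : ℝ × (Fin n → ℝ)) + (1 - l) • (t₂, y₂) := rfl
    calc f' (t₁, y₁) ^ l * g' (t₂, y₂) ^ (1 - l)
        ≤ h (l • e.symm (t₁, y₁) + (1 - l) • e.symm (t₂, y₂)) := hyp _ _
      _ = h' (l * t₁ + (1 - l) * t₂, l • y₁ + (1 - l) • y₂) := by
          show h (l • e.symm (t₁, y₁) + (1 - l) • e.symm (t₂, y₂))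
            = h (e.symm (l • ((t₁, y₁) : ℝ × (Fin n → ℝ)) + (1 - l) • (t₂, y₂)))
          rw [esymmlin]

lemma surgery_lower {α : Type*} [MeasurableSpace α] {μ : Measure α} {f : α → ℝ≥0∞}
    (hf : AEMeasurable f μ) :
    ∃ f' : α → ℝ≥0∞, Measurable f' ∧ (∀ x, f' x ≤ f x) ∧ f' =ᵐ[μ] f := by
  classical
  have h0 : μ {x | ¬ f x = hf.mk f x} = 0 := by
    have := hf.ae_eq_mk
    rwa [Filter.EventuallyEq, ae_iff] at this
  obtain ⟨N, hsub, hNm, hN0⟩ := exists_measurable_superset_of_null h0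
  refine ⟨N.piecewise (fun _ => 0) (hf.mk f),
    Measurable.piecewise hNm measurable_const hf.measurable_mk, fun x => ?_, ?_⟩
  · by_cases hx : x ∈ N
    · simp [Set.piecewise_eq_of_mem _ _ _ hx]
    · rw [Set.piecewise_eq_of_notMem _ _ _ hx]
      have : f x = hf.mk f x := by
        by_contra hc
        exact hx (hsub hc)
      exact this.ge
  · have hNcompl : ∀ᵐ x ∂μ, x ∉ N := by
      rw [ae_iff]
      simpa using hN0
    filter_upwards [hNcompl] with x hx
    rw [Set.piecewise_eq_of_notMem _ _ _ hx]
    have : f x = hf.mk f x := by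
      by_contra hc
      exact hx (hsub hc)
    exact this.symm

lemma surgery_upper {α : Type*} [MeasurableSpace α] {μ : Measure α} {f : α → ℝ≥0∞}
    (hf : AEMeasurable f μ) :
    ∃ f' : α → ℝ≥0∞, Measurable f' ∧ (∀ x, f x ≤ f' x) ∧ f' =ᵐ[μ] f := by
  classical
  have h0 : μ {x | ¬ f x = hf.mk f x} = 0 := by
    have := hf.ae_eq_mk
    rwa [Filter.EventuallyEq, ae_iff] at this
  obtain ⟨N, hsub, hNm, hN0⟩ := exists_measurable_superset_of_null h0
  refine ⟨N.piecewise (fun _ => ∞) (hf.mk f),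
    Measurable.piecewise hNm measurable_const hf.measurable_mk, fun x => ?_, ?_⟩
  · by_cases hx : x ∈ N
    · simp [Set.piecewise_eq_of_mem _ _ _ hx]
    · rw [Set.piecewise_eq_of_notMem _ _ _ hx]
      have : f x = hf.mk f x := by
        by_contra hc
        exact hx (hsub hc)
      exact this.le
  · have hNcompl : ∀ᵐ x ∂μ, x ∉ N := by
      rw [ae_iff]
      simpa using hN0
    filter_upwards [hNcompl] with x hx
    rw [Set.piecewise_eq_of_notMem _ _ _ hx]
    have : f x = hf.mk f x := by
      by_contra hc
      exact hx (hsub hc)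
    exact this.symm

/-- Prékopa's theorem: the marginal of a log-concave nonnegative integrable
function is log-concave. -/
theorem prekopa_marginal_logconcave
    (m n : ℕ) (h : (Fin m → ℝ) × (Fin n → ℝ) → ℝ)
    (hnonneg : ∀ z, 0 ≤ h z)
    (hlc : ∀ z₁ z₂ : (Fin m → ℝ) × (Fin n → ℝ), ∀ l : ℝ, 0 ≤ l → l ≤ 1 →
      h (l • z₁ + (1 - l) • z₂) ≥ h z₁ ^ l * h z₂ ^ (1 - l))
    (hint : ∀ x : Fin m → ℝ, Integrable (fun y => h (x, y)))
    (I : (Fin m → ℝ) → ℝ) (hI : I = fun x => ∫ y, h (x, y)) :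
    ∀ x₁ x₂ : Fin m → ℝ, ∀ l : ℝ, 0 ≤ l → l ≤ 1 →
      I (l • x₁ + (1 - l) • x₂) ≥ I x₁ ^ l * I x₂ ^ (1 - l) := by
  subst hI
  intro x₁ x₂ l hl0 hl1
  have Inonneg : ∀ x : Fin m → ℝ, 0 ≤ ∫ y, h (x, y) :=
    fun x => integral_nonneg fun y => hnonneg _
  rcases eq_or_lt_of_le hl0 with rfl | hl0'
  · simp [Real.rpow_natCast]
  rcases eq_or_lt_of_le hl1 with rfl | hl1'
  · simp
  -- main case 0 < l < 1
  set x₀ := l • x₁ + (1 - l) • x₂ with hx₀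
  have h1l : (0:ℝ) < 1 - l := by linarith
  set F0 : (Fin n → ℝ) → ℝ≥0∞ := fun y => ENNReal.ofReal (h (x₁, y)) with hF0
  set G0 : (Fin n → ℝ) → ℝ≥0∞ := fun y => ENNReal.ofReal (h (x₂, y)) with hG0
  set H0 : (Fin n → ℝ) → ℝ≥0∞ := fun y => ENNReal.ofReal (h (x₀, y)) with hH0
  have hF0m : AEMeasurable F0 volume := ((hint x₁).1.aemeasurable).ennreal_ofReal
  have hG0m : AEMeasurable G0 volume := ((hint x₂).1.aemeasurable).ennreal_ofReal
  have hH0m : AEMeasurable H0 volume := ((hint x₀).1.aemeasurable).ennreal_ofReal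
  obtain ⟨f', hf'm, hf'le, hf'ae⟩ := surgery_lower hF0m
  obtain ⟨g', hg'm, hg'le, hg'ae⟩ := surgery_lower hG0m
  obtain ⟨H', hH'm, hH'ge, hH'ae⟩ := surgery_upper hH0m
  have key := pl_dim n hl0' hl1' f' g' H' hf'm hg'm hH'm ?_
  swap
  · intro y₁ y₂
    calc f' y₁ ^ l * g' y₂ ^ (1 - l)
        ≤ F0 y₁ ^ l * G0 y₂ ^ (1 - l) :=
          mul_le_mul' (ENNReal.rpow_le_rpow (hf'le y₁) hl0)
            (ENNReal.rpow_le_rpow (hg'le y₂) h1l.le)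
      _ = ENNReal.ofReal (h (x₁, y₁) ^ l * h (x₂, y₂) ^ (1 - l)) := by
          rw [ENNReal.ofReal_mul (Real.rpow_nonneg (hnonneg _) _),
            ENNReal.ofReal_rpow_of_nonneg (hnonneg _) hl0,
            ENNReal.ofReal_rpow_of_nonneg (hnonneg _) h1l.le]
      _ ≤ ENNReal.ofReal (h (l • ((x₁, y₁) : (Fin m → ℝ) × (Fin n → ℝ))
            + (1 - l) • (x₂, y₂))) :=
          ENNReal.ofReal_le_ofReal (hlc _ _ l hl0 hl1)
      _ = H0 (l • y₁ + (1 - l) • y₂) := rfl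
      _ ≤ H' (l • y₁ + (1 - l) • y₂) := hH'ge _
  have e_f : ∫⁻ y, f' y = ∫⁻ y, F0 y := lintegral_congr_ae hf'ae
  have e_g : ∫⁻ y, g' y = ∫⁻ y, G0 y := lintegral_congr_ae hg'ae
  have e_h : ∫⁻ y, H' y = ∫⁻ y, H0 y := lintegral_congr_ae hH'ae
  rw [e_f, e_g, e_h] at key
  have hH0fin : ∫⁻ y, H0 y ≠ ∞ := (hint x₀).lintegral_lt_top.ne
  have conv : ∀ x : Fin m → ℝ,
      ∫ y, h (x, y) = (∫⁻ y, ENNReal.ofReal (h (x, y))).toReal := fun x =>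
    integral_eq_lintegral_of_nonneg_ae (ae_of_all _ fun y => hnonneg _) (hint x).1
  rw [ge_iff_le]
  show (∫ y, h (x₁, y)) ^ l * (∫ y, h (x₂, y)) ^ (1 - l) ≤ ∫ y, h (x₀, y)
  rw [conv x₀, conv x₁, conv x₂]
  calc (∫⁻ y, F0 y).toReal ^ l * (∫⁻ y, G0 y).toReal ^ (1 - l)
      = ((∫⁻ y, F0 y) ^ l * (∫⁻ y, G0 y) ^ (1 - l)).toReal := by
        rw [ENNReal.toReal_mul, ENNReal.toReal_rpow, ENNReal.toReal_rpow]
    _ ≤ (∫⁻ y, H0 y).toReal := ENNReal.toReal_mono hH0fin key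
end

section
/- Let C be a symmetric positive definite m×m real matrix and n > 0. The function Σ ↦ −(n/2) log det Σ − (1/2) tr(Σ⁻¹ C) over symmetric positive definite matrices Σ attains its unique maximum at Σ* = C/n. -/
open Matrix Real Finset
open scoped MatrixOrder

private lemma mstep_conj_posDef {m : ℕ} {A B : Matrix (Fin m) (Fin m) ℝ}
    (hA : A.PosDef) (hB : IsUnit B.det) : (Bᴴ * A * B).PosDef := by
  refine Matrix.PosDef.of_dotProduct_mulVec_pos (Matrix.isHermitian_conjTranspose_mul_mul B hA.1) fun x hx => ?_
  have hBx : B *ᵥ x ≠ 0 :=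
    (Matrix.mulVec_injective_iff_isUnit.mpr (isUnit_iff_isUnit_det _ |>.2 hB)
      |>.ne_iff' (by simp)).2 hx
  have key : star x ⬝ᵥ ((Bᴴ * A * B) *ᵥ x) = star (B *ᵥ x) ⬝ᵥ (A *ᵥ (B *ᵥ x)) := by
    rw [← Matrix.mulVec_mulVec, ← Matrix.mulVec_mulVec, Matrix.dotProduct_mulVec,
      ← Matrix.star_mulVec]
  rw [key]
  exact hA.dotProduct_mulVec_pos hBx

private lemma mstep_trace_eq {m : ℕ} {B : Matrix (Fin m) (Fin m) ℝ} (hB : B.PosDef) :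
    B.trace = ∑ i, hB.1.eigenvalues i := by
  calc B.trace = ((hB.1.eigenvectorUnitary : Matrix (Fin m) (Fin m) ℝ) *
      Matrix.diagonal (RCLike.ofReal ∘ hB.1.eigenvalues) *
      (star (hB.1.eigenvectorUnitary : Matrix (Fin m) (Fin m) ℝ))).trace := by
        exact congrArg Matrix.trace hB.1.spectral_theorem
    _ = ∑ i, hB.1.eigenvalues i := by
      rw [Matrix.trace_mul_comm, ← mul_assoc, Unitary.coe_star_mul_self, one_mul]
      simp [Matrix.trace_diagonal]

private lemma mstep_g_le {n t : ℝ} (hn : 0 < n) (ht : 0 < t) :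
    n / 2 * Real.log t - t / 2 ≤ n / 2 * Real.log n - n / 2 := by
  have h := Real.log_le_sub_one_of_pos (div_pos ht hn)
  rw [Real.log_div ht.ne' hn.ne'] at h
  have h2 := mul_le_mul_of_nonneg_left h (by positivity : (0:ℝ) ≤ n / 2)
  have e : n / 2 * (t / n - 1) = t / 2 - n / 2 := by field_simp
  nlinarith

private lemma mstep_g_lt {n t : ℝ} (hn : 0 < n) (ht : 0 < t) (hne : t ≠ n) :
    n / 2 * Real.log t - t / 2 < n / 2 * Real.log n - n / 2 := by
  have hne' : t / n ≠ 1 := by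
    intro h; exact hne (by field_simp at h; linarith)
  have h := Real.log_lt_sub_one_of_pos (div_pos ht hn) hne'
  rw [Real.log_div ht.ne' hn.ne'] at h
  have h2 := mul_lt_mul_of_pos_left h (by positivity : (0:ℝ) < n / 2)
  have e : n / 2 * (t / n - 1) = t / 2 - n / 2 := by field_simp
  nlinarith

/-- M-step covariance update: S ↦ −(n/2) log det S − (1/2) tr(S⁻¹ C) is
uniquely maximized over positive definite matrices at S = C / n. -/
theorem mstep_covariance_update
    (m : ℕ) (C : Matrix (Fin m) (Fin m) ℝ) (hC : C.PosDef)
    (n : ℝ) (hn : 0 < n)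
    (F : Matrix (Fin m) (Fin m) ℝ → ℝ)
    (hF : F = fun S => -(n / 2) * Real.log S.det - (1 / 2) * (S⁻¹ * C).trace) :
    ∀ S : Matrix (Fin m) (Fin m) ℝ, S.PosDef →
      F S ≤ F (n⁻¹ • C) ∧ (F S = F (n⁻¹ • C) → S = n⁻¹ • C) := by
  subst hF
  have hdetC : 0 < C.det := hC.det_pos
  -- value at the optimum
  have hCinv : (n⁻¹ • C)⁻¹ = n • C⁻¹ := by
    apply Matrix.inv_eq_right_inv
    rw [Matrix.smul_mul, Matrix.mul_smul, Matrix.mul_nonsing_inv _ hdetC.ne'.isUnit,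
      smul_smul, inv_mul_cancel₀ hn.ne', one_smul]
  have hFopt : -(n / 2) * Real.log (n⁻¹ • C).det - (1 / 2) * ((n⁻¹ • C)⁻¹ * C).trace
      = -(n / 2) * Real.log C.det + ∑ _i : Fin m, (n / 2 * Real.log n - n / 2) := by
    rw [hCinv, Matrix.det_smul, Matrix.smul_mul, Matrix.nonsing_inv_mul _ hdetC.ne'.isUnit,
      Real.log_mul (by positivity) hdetC.ne', Real.log_pow, Real.log_inv]
    simp [Matrix.trace_smul, Matrix.trace_one, Finset.sum_const]
    ring
  intro S hS
  set R := CFC.sqrt C with hRdef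
  have hRH : R.IsHermitian := (Matrix.nonneg_iff_posSemidef.mp (CFC.sqrt_nonneg C)).1
  have hRR : R * R = C := CFC.sqrt_mul_sqrt_self C hC.posSemidef.nonneg
  have hdetS : 0 < S.det := hS.det_pos
  have hdetRR : R.det * R.det = C.det := by rw [← Matrix.det_mul, hRR]
  have hdetR : IsUnit R.det := by
    have : R.det ≠ 0 := fun h => by rw [h, zero_mul] at hdetRR; exact hdetC.ne hdetRR
    exact this.isUnit
  have hB : (R * S⁻¹ * R).PosDef := by
    have := mstep_conj_posDef hS.inv hdetR
    rwa [hRH.eq] at this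
  set B := R * S⁻¹ * R with hBdef
  set μ := hB.1.eigenvalues with hμdef
  have hμpos : ∀ i, 0 < μ i := hB.eigenvalues_pos
  have hdetB : B.det = C.det * S.det⁻¹ := by
    rw [hBdef, Matrix.det_mul, Matrix.det_mul, Matrix.det_nonsing_inv,
      Ring.inverse_eq_inv', ← hdetRR]; ring
  have hdetBprod : B.det = ∏ i, μ i := by
    simpa using hB.1.det_eq_prod_eigenvalues
  have hdetBpos : 0 < B.det := hB.det_pos
  have hlogS : Real.log S.det = Real.log C.det - ∑ i, Real.log (μ i) := by
    have h1 : Real.log B.det = Real.log C.det - Real.log S.det := by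
      rw [hdetB, Real.log_mul hdetC.ne' (inv_ne_zero hdetS.ne'), Real.log_inv]; ring
    have h2 : Real.log B.det = ∑ i, Real.log (μ i) := by
      rw [hdetBprod]
      exact Real.log_prod (fun i _ => (hμpos i).ne')
    linarith
  have htr : (S⁻¹ * C).trace = ∑ i, μ i := by
    rw [← hRR, ← mul_assoc, Matrix.trace_mul_comm, ← mul_assoc, ← hBdef]
    exact mstep_trace_eq hB
  have hFS : -(n / 2) * Real.log S.det - (1 / 2) * (S⁻¹ * C).trace
      = -(n / 2) * Real.log C.det + ∑ i, (n / 2 * Real.log (μ i) - μ i / 2) := by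
    rw [hlogS, htr, Finset.sum_sub_distrib, ← Finset.mul_sum, ← Finset.sum_div]
    ring
  have hterm : ∀ i ∈ Finset.univ, n / 2 * Real.log (μ i) - μ i / 2
      ≤ n / 2 * Real.log n - n / 2 := fun i _ => mstep_g_le hn (hμpos i)
  constructor
  · dsimp only
    rw [hFS, hFopt]
    have := Finset.sum_le_sum hterm
    linarith
  · intro heq
    dsimp only at heq
    rw [hFS, hFopt] at heq
    have hsum : ∑ i, (n / 2 * Real.log (μ i) - μ i / 2)
        = ∑ _i : Fin m, (n / 2 * Real.log n - n / 2) := by linarith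
    have hall : ∀ i, μ i = n := by
      by_contra h
      push_neg at h
      obtain ⟨j, hj⟩ := h
      have := Finset.sum_lt_sum hterm ⟨j, Finset.mem_univ j, mstep_g_lt hn (hμpos j) hj⟩
      linarith
    have hBeq : B = n • 1 := by
      have hsp := hB.1.spectral_theorem
      rw [Unitary.conjStarAlgAut_apply] at hsp
      have hdiag : Matrix.diagonal (RCLike.ofReal ∘ μ) = n • (1 : Matrix (Fin m) (Fin m) ℝ) := by
        have : (RCLike.ofReal ∘ μ : Fin m → ℝ) = fun _ => n := funext fun i => by
          simp [hall i]
        rw [this]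
        ext i j
        rcases eq_or_ne i j with h | h <;>
          simp [h, Matrix.diagonal_apply, Matrix.one_apply]
      rw [hdiag] at hsp
      rw [hsp, Matrix.mul_smul, mul_one, Matrix.smul_mul]
      congr 1
      exact Matrix.mem_unitaryGroup_iff.mp hB.1.eigenvectorUnitary.2
    have hSinv : S⁻¹ = n • C⁻¹ := by
      have h1 : R⁻¹ * B * R⁻¹ = S⁻¹ := by
        rw [hBdef, ← mul_assoc, ← mul_assoc, Matrix.nonsing_inv_mul _ hdetR, one_mul,
          mul_assoc, Matrix.mul_nonsing_inv _ hdetR, mul_one]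
      have h2 : C⁻¹ = R⁻¹ * R⁻¹ := by rw [← hRR, Matrix.mul_inv_rev]
      rw [← h1, hBeq, Matrix.mul_smul, mul_one, Matrix.smul_mul, h2]
    have := congrArg (·⁻¹) hSinv
    replace this : S⁻¹⁻¹ = (n • C⁻¹)⁻¹ := this
    rw [Matrix.nonsing_inv_nonsing_inv _ hdetS.ne'.isUnit] at this
    rw [this]
    apply Matrix.inv_eq_right_inv
    rw [Matrix.smul_mul, Matrix.mul_smul, Matrix.nonsing_inv_mul _ hdetC.ne'.isUnit,
      smul_smul, mul_inv_cancel₀ hn.ne', one_smul]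
end

section
/- Let X be a random vector in ℝᵐ with a density, and let Q(θ|θ') = E^{θ'}[log f_θ(X, Y) | Y = y] be the expected complete-data log-likelihood of a latent-variable model with observed data y and latent X. If θ^{k+1} maximizes θ ↦ Q(θ|θ^k), then the observed-data log-likelihood is non-decreasing: log L(θ^{k+1}; y) ≥ log L(θ^k; y). -/
open MeasureTheory

/-- EM monotonicity (Dempster–Laird–Rubin): maximizing the expected
complete-data log-likelihood Q(·|θᵏ) does not decrease the observed-data
log-likelihood. Here `f θ` is the joint density of the latent variable X with
the observed data y absorbed, `L θ = ∫ f θ x dx` is the observed-data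
likelihood, and `Q θ θ' = ∫ log (f θ x) · f θ' x / L θ' dx`. -/
theorem em_monotonicity
    {Θ : Type*} (m : ℕ)
    (f : Θ → (Fin m → ℝ) → ℝ)
    (hf_pos : ∀ θ x, 0 < f θ x)
    (hf_int : ∀ θ, Integrable (f θ))
    (L : Θ → ℝ) (hL : L = fun θ => ∫ x, f θ x)
    (hLpos : ∀ θ, 0 < L θ)
    (Q : Θ → Θ → ℝ)
    (hQ : Q = fun θ θ' => ∫ x, Real.log (f θ x) * (f θ' x / L θ'))
    (hQint : ∀ θ θ', Integrable (fun x => Real.log (f θ x) * (f θ' x / L θ')))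
    (θk θk1 : Θ)
    (hmax : ∀ θ, Q θ θk ≤ Q θk1 θk) :
    Real.log (L θk) ≤ Real.log (L θk1) := by
  have hLk := hLpos θk
  have hLk1 := hLpos θk1
  have hLkeq : ∫ x, f θk x = L θk := by rw [hL]
  have hLk1eq : ∫ x, f θk1 x = L θk1 := by rw [hL]
  have hw_int : Integrable (fun x => f θk x / L θk) := (hf_int θk).div_const _
  have hw_sum : ∫ x, f θk x / L θk = 1 := by
    rw [integral_div, hLkeq, div_self hLk.ne']
  have hw1_int : Integrable (fun x => f θk1 x / L θk1) := (hf_int θk1).div_const _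
  have hw1_sum : ∫ x, f θk1 x / L θk1 = 1 := by
    rw [integral_div, hLk1eq, div_self hLk1.ne']
  set c := Real.log (L θk1) - Real.log (L θk) with hc
  have key : ∀ x, (Real.log (f θk1 x) * (f θk x / L θk)
      - Real.log (f θk x) * (f θk x / L θk)) - c * (f θk x / L θk)
      ≤ f θk1 x / L θk1 - f θk x / L θk := by
    intro x
    have hfx := hf_pos θk x
    have hfx1 := hf_pos θk1 x
    have hwpos : 0 < f θk x / L θk := div_pos hfx hLk
    set t := (f θk1 x * L θk) / (f θk x * L θk1) with ht
    have htpos : 0 < t := div_pos (mul_pos hfx1 hLk) (mul_pos hfx hLk1)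
    have hlog : Real.log t ≤ t - 1 := Real.log_le_sub_one_of_pos htpos
    have hlogt : Real.log t = Real.log (f θk1 x) - Real.log (f θk x) - c := by
      rw [ht, Real.log_div (by positivity) (by positivity),
        Real.log_mul hfx1.ne' hLk.ne', Real.log_mul hfx.ne' hLk1.ne', hc]
      ring
    have hmulw : t * (f θk x / L θk) = f θk1 x / L θk1 := by
      rw [ht]; field_simp
    have := mul_le_mul_of_nonneg_right hlog hwpos.le
    calc (Real.log (f θk1 x) * (f θk x / L θk)
        - Real.log (f θk x) * (f θk x / L θk)) - c * (f θk x / L θk)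
        = Real.log t * (f θk x / L θk) := by rw [hlogt]; ring
      _ ≤ (t - 1) * (f θk x / L θk) := this
      _ = f θk1 x / L θk1 - f θk x / L θk := by rw [sub_mul, one_mul, hmulw]
  have hint1 := hQint θk1 θk
  have hint2 := hQint θk θk
  have hintc : Integrable (fun x => c * (f θk x / L θk)) := hw_int.const_mul c
  have hmono := integral_mono ((hint1.sub hint2).sub hintc) (hw1_int.sub hw_int) key
  simp only [Pi.sub_apply] at hmono
  have hint12 : Integrable (fun x => Real.log (f θk1 x) * (f θk x / L θk)
      - Real.log (f θk x) * (f θk x / L θk)) := hint1.sub hint2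
  rw [integral_sub hint12 hintc, integral_sub hint1 hint2,
    integral_sub hw1_int hw_int, hw_sum, hw1_sum, integral_const_mul, hw_sum,
    mul_one] at hmono
  have hmax' := hmax θk
  rw [hQ] at hmax'
  have : 0 ≤ c := by linarith
  linarith
end
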